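/- arXiv:math/0509318 — 4 statements merged into one kernel-verified Lean document; each statement's English description precedes it below -/
import Mathlib

section
/- In the category of right R-modules, the inclusion A ↪ B of a submodule is a finitely presentable morphism (i.e., a finitely presentable object of (A ↓ Mod-R)) if and only if the quotient module B/A is finitely presentable. -/
universe v u

open CategoryTheory Limits Opposite

/-- A small category `J` is `κ`-filtered if every diagram in `J` of size `< κ`
admits a cocone. -/
def IsKappaFiltered (J : Type v) [SmallCategory J] (κ : Cardinal.{v}) : Prop :=
  ∀ (K : Type v) (_ : SmallCategory K), Cardinal.mk (Σ (a : K) (b : K), a ⟶ b) < κ →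
    ∀ F : K ⥤ J, Nonempty (Cocone F)

/-- An object `X` is `κ`-presentable if its hom-functor preserves `κ`-filtered colimits. -/
def KPresentable {C : Type u} [Category.{v} C] (κ : Cardinal.{v}) (X : C) : Prop :=
  ∀ (J : Type v) (_ : SmallCategory J), IsKappaFiltered J κ →
    Nonempty (PreservesColimitsOfShape J (coyoneda.obj (op X)))

/-- An object `X` is `κ`-generated if its hom-functor preserves `κ`-filtered colimits
of diagrams of monomorphisms. -/
def KGenerated {C : Type u} [Category.{v} C] (κ : Cardinal.{v}) (X : C) : Prop :=
  ∀ (J : Type v) (_ : SmallCategory J), IsKappaFiltered J κ →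
    ∀ F : J ⥤ C, (∀ {i j : J} (f : i ⟶ j), Mono (F.map f)) →
      Nonempty (PreservesColimit F (coyoneda.obj (op X)))

/-- `C` is locally `κ`-presentable. -/
def LocallyPresentable (C : Type u) [Category.{v} C] (κ : Cardinal.{v}) : Prop :=
  Cardinal.IsRegular κ ∧ HasColimits C ∧ ∃ S : Set C,
    Small.{v} S ∧ (∀ X ∈ S, KPresentable κ X) ∧
    ∀ A : C, ∃ (J : Type v) (_ : SmallCategory J) (_ : IsKappaFiltered J κ) (F : J ⥤ C)
      (c : Cocone F), Nonempty (IsColimit c) ∧ c.pt = A ∧ ∀ j, F.obj j ∈ S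

/-- `K` is injective with respect to the morphism `n`. -/
def InjWrt {C : Type u} [Category.{v} C] {X Y : C} (n : X ⟶ Y) (K : C) : Prop :=
  ∀ u : X ⟶ K, ∃ w : Y ⟶ K, n ≫ w = u

/-- `f : A ⟶ B` is a `κ`-pure morphism. -/
def KPure {C : Type u} [Category.{v} C] (κ : Cardinal.{v}) {A B : C} (f : A ⟶ B) : Prop :=
  ∀ ⦃P Q : C⦄ (z : P ⟶ Q) (u : P ⟶ A) (v : Q ⟶ B), KPresentable κ P → KPresentable κ Q →
    u ≫ f = z ≫ v → ∃ d : Q ⟶ A, z ≫ d = u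


set_option synthInstance.maxHeartbeats 1000000
set_option maxHeartbeats 2000000
universe w' w

theorem isFiltered_of_isKappaFiltered {J : Type v} [SmallCategory J]
    (h : IsKappaFiltered J Cardinal.aleph0) : IsFiltered J := by
  apply IsFiltered.of_cocone_nonempty.{v}
  intro K _ _ F
  exact h K _ (Cardinal.mk_lt_aleph0_iff.2 (by infer_instance)) F

theorem isKappaFiltered_of_isFiltered {J : Type v} [SmallCategory J]
    (h : IsFiltered J) : IsKappaFiltered J Cardinal.aleph0 := by
  intro K _ hK F
  have hfin : Finite (Σ (a : K) (b : K), a ⟶ b) := Cardinal.mk_lt_aleph0_iff.mp hK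
  have hobj : Finite K := Finite.of_injective
    (fun a => (⟨a, a, 𝟙 a⟩ : Σ (a : K) (b : K), a ⟶ b))
    (fun a b hab => congrArg Sigma.fst hab)
  have hhom : ∀ a b : K, Finite (a ⟶ b) := fun a b => Finite.of_injective
    (fun f => (⟨a, b, f⟩ : Σ (a : K) (b : K), a ⟶ b))
    (fun f g hfg => by simpa using hfg)
  letI : Fintype K := Fintype.ofFinite K
  letI : ∀ a b : K, Fintype (a ⟶ b) := fun a b => Fintype.ofFinite _
  haveI : FinCategory K := ⟨inferInstance, inferInstance⟩
  exact IsFiltered.cocone_nonempty F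

section UnderTransfer
variable {C : Type u} [Category.{v} C] {X : C} {J : Type w} [Category.{w'} J] [IsConnected J]
variable {F : J ⥤ Under X}

theorem under_cocone_w {c : Cocone F} (j : J) :
    (F.obj j).hom ≫ (c.ι.app j).right = c.pt.hom :=
  Under.w (c.ι.app j)

theorem under_cocone_const (s : Cocone (F ⋙ Under.forget X)) (j j' : J) :
    (F.obj j).hom ≫ s.ι.app j = (F.obj j').hom ≫ s.ι.app j' := by
  refine constant_of_preserves_morphisms (fun j => (F.obj j).hom ≫ s.ι.app j) ?_ j j'
  intro j₁ j₂ f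
  have hw : (F.obj j₁).hom ≫ ((F ⋙ Under.forget X).map f) = (F.obj j₂).hom :=
    Under.w (F.map f)
  erw [← s.w f, ← Category.assoc, hw]
  rfl

/-- Raise a cocone over `F ⋙ Under.forget X` to a cocone over `F`. -/
@[simps]
noncomputable def raiseUnderCocone (s : Cocone (F ⋙ Under.forget X)) : Cocone F where
  pt := Under.mk ((F.obj (Classical.arbitrary J)).hom ≫ s.ι.app (Classical.arbitrary J))
  ι :=
    { app := fun j => Under.homMk (s.ι.app j) (under_cocone_const s j _)
      naturality := fun i j f => by
        apply Under.UnderMorphism.ext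
        exact (s.w f).trans (Category.comp_id _).symm }

/-- The forgetful functor `Under X ⥤ C` maps colimit cocones over connected diagrams to
colimit cocones. -/
noncomputable def underForgetMapCoconeIsColimit {c : Cocone F} (hc : IsColimit c) :
    IsColimit ((Under.forget X).mapCocone c) where
  desc s := (hc.desc (raiseUnderCocone s)).right
  fac s j := congrArg CommaMorphism.right (hc.fac (raiseUnderCocone s) j)
  uniq s m hm := by
    have hm' : ∀ j, (c.ι.app j).right ≫ m = s.ι.app j := hm
    have hw : c.pt.hom ≫ m = (raiseUnderCocone s).pt.hom := by
      erw [← under_cocone_w (Classical.arbitrary J), Category.assoc,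
        hm' (Classical.arbitrary J)]
      rfl
    have h2 : Under.homMk (U := c.pt) (V := (raiseUnderCocone s).pt) m hw = hc.desc (raiseUnderCocone s) := by
      apply hc.uniq (raiseUnderCocone s)
      intro j
      apply Under.UnderMorphism.ext
      exact hm j
    show m = (hc.desc (raiseUnderCocone s)).right
    rw [← h2]
    rfl

/-- A cocone over a connected diagram in `Under X` is colimit if its image under the
forgetful functor is. -/
noncomputable def isColimitOfUnderForget (c : Cocone F)
    (hc : IsColimit ((Under.forget X).mapCocone c)) : IsColimit c where
  desc s := Under.homMk (hc.desc ((Under.forget X).mapCocone s)) (by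
    erw [← under_cocone_w (c := c) (Classical.arbitrary J), Category.assoc]
    have h1 := hc.fac ((Under.forget X).mapCocone s) (Classical.arbitrary J)
    dsimp at h1 ⊢
    rw [h1, under_cocone_w (c := s) (Classical.arbitrary J)])
  fac s j := by
    apply Under.UnderMorphism.ext
    exact hc.fac ((Under.forget X).mapCocone s) j
  uniq s m hm := by
    apply Under.UnderMorphism.ext
    exact hc.uniq ((Under.forget X).mapCocone s) m.right
      (fun j => congrArg CommaMorphism.right (hm j))
end UnderTransfer

section StepA
variable {R : Type u} [Ring R] {M : Type u} [AddCommGroup M] [Module R M] (N : Submodule R M)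

/-- The directed diagram of submodules `N ⊔ span S` in `Under N`. -/
noncomputable def diagA : Finset M ⥤ Under (ModuleCat.of R ↥N) where
  obj S := Under.mk (ModuleCat.ofHom (Submodule.inclusion
    (le_sup_left : N ≤ N ⊔ Submodule.span R (↑S : Set M))))
  map {S T} f := Under.homMk (ModuleCat.ofHom (Submodule.inclusion
      (sup_le_sup_left (Submodule.span_mono (Finset.coe_subset.2 (leOfHom f))) N)))
    (by ext x; rfl)
  map_id S := by apply Under.UnderMorphism.ext; ext x; rfl
  map_comp f g := by apply Under.UnderMorphism.ext; ext x; rfl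

noncomputable def coconeA : Cocone (diagA N) where
  pt := Under.mk (ModuleCat.ofHom N.subtype : ModuleCat.of R ↥N ⟶ ModuleCat.of R M)
  ι :=
    { app := fun S => Under.homMk (ModuleCat.ofHom (N ⊔ Submodule.span R (↑S : Set M)).subtype)
        (by ext x; rfl)
      naturality := fun S T f => by apply Under.UnderMorphism.ext; ext x; rfl }

noncomputable def coconeAIsColimit : IsColimit (coconeA N) := by
  classical
  haveI : IsConnected (Finset M) := IsFiltered.isConnected _
  apply isColimitOfUnderForget
  haveI : ReflectsColimitsOfShape (Finset M) (forget (ModuleCat.{u} R)) :=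
    reflectsColimitsOfShape_of_reflectsIsomorphisms
  apply isColimitOfReflects (forget (ModuleCat.{u} R))
  apply Types.FilteredColimit.isColimitOf
  · intro x
    refine ⟨{x}, ⟨x, Submodule.mem_sup_right (Submodule.subset_span (Finset.mem_coe.2 (Finset.mem_singleton_self _)))⟩, rfl⟩
  · intro S T xS xT h
    refine ⟨S ⊔ T, homOfLE le_sup_left, homOfLE le_sup_right, ?_⟩
    exact Subtype.ext h
end StepA

section StepAex
variable {R : Type u} [Ring R] {M : Type u} [AddCommGroup M] [Module R M] (N : Submodule R M)

theorem stepA (hP : KPresentable Cardinal.aleph0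
    (Under.mk (ModuleCat.ofHom N.subtype : ModuleCat.of R ↥N ⟶ ModuleCat.of R M))) :
    ∃ S : Finset M, N ⊔ Submodule.span R (↑S : Set M) = ⊤ := by
  classical
  obtain ⟨P⟩ := hP (Finset M) inferInstance (isKappaFiltered_of_isFiltered inferInstance)
  haveI := P
  have h2 : IsColimit ((coyoneda.obj (op (Under.mk (ModuleCat.ofHom N.subtype :
      ModuleCat.of R ↥N ⟶ ModuleCat.of R M)))).mapCocone (coconeA N)) :=
    isColimitOfPreserves _ (coconeAIsColimit N)
  obtain ⟨S, g, hg⟩ := Types.jointly_surjective _ h2 (𝟙 _)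
  refine ⟨S, ?_⟩
  have hg' : g ≫ (coconeA N).ι.app S = 𝟙 _ := hg
  have h4 : g.right ≫ ModuleCat.ofHom (N ⊔ Submodule.span R (↑S : Set M)).subtype
      = 𝟙 (ModuleCat.of R M) := by
    have := congrArg CommaMorphism.right hg'
    exact this
  have hsurj : Function.Surjective ((N ⊔ Submodule.span R (↑S : Set M)).subtype) := by
    intro x
    refine ⟨g.right x, ?_⟩
    have h5 := LinearMap.congr_fun (congrArg ModuleCat.Hom.hom h4) x
    exact h5
  rw [← Submodule.range_subtype (N ⊔ Submodule.span R (↑S : Set M)),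
    LinearMap.range_eq_top.mpr hsurj]
end StepAex
section StepB
variable {R : Type u} [Ring R] {M : Type u} [AddCommGroup M] [Module R M]
  (N : Submodule R M) (S : Finset M)

/-- Linear combination of the elements of `S`. -/
noncomputable def linB : (↥S → R) →ₗ[R] M :=
  Fintype.linearCombination R (fun i : ↥S => (i : M))

/-- `N ⊕ R^S → M`. -/
noncomputable def piB : (↥N × (↥S → R)) →ₗ[R] M := N.subtype.coprod (linB S)

/-- `R^S → M ⧸ N`. -/
noncomputable def qB : (↥S → R) →ₗ[R] (M ⧸ N) := N.mkQ ∘ₗ linB S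

/-- the relation module. -/
noncomputable def LB : Submodule R (↥S → R) := LinearMap.ker (qB N S)

/-- relations embedded in `N ⊕ R^S`. -/
noncomputable def κB (x : ↥(LB N S)) : ↥N × (↥S → R) :=
  (⟨-(linB S x.val), neg_mem ((Submodule.Quotient.mk_eq_zero N).1 x.2)⟩, x.val)

/-- span of finitely many relations. -/
noncomputable def KB (T : Finset ↥(LB N S)) : Submodule R (↥N × (↥S → R)) :=
  Submodule.span R (κB N S '' ↑T)

theorem KB_mono {T T' : Finset ↥(LB N S)} (h : T ⊆ T') : KB N S T ≤ KB N S T' :=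
  Submodule.span_mono (Set.image_mono h)

theorem KB_le_ker (T : Finset ↥(LB N S)) : KB N S T ≤ LinearMap.ker (piB N S) := by
  rw [KB, Submodule.span_le]
  rintro _ ⟨x, _, rfl⟩
  simp [κB, piB]

/-- the structure map `N → (N ⊕ R^S) ⧸ K_T`. -/
noncomputable def uB (T : Finset ↥(LB N S)) : ↥N →ₗ[R] (↥N × (↥S → R)) ⧸ KB N S T :=
  (KB N S T).mkQ ∘ₗ LinearMap.inl R ↥N (↥S → R)

/-- the comparison map to `M`. -/
noncomputable def vB (T : Finset ↥(LB N S)) : ((↥N × (↥S → R)) ⧸ KB N S T) →ₗ[R] M :=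
  Submodule.liftQ (KB N S T) (piB N S) (KB_le_ker N S T)

/-- the diagram of finitely presented approximations. -/
noncomputable def diagB : Finset ↥(LB N S) ⥤ Under (ModuleCat.of R ↥N) where
  obj T := Under.mk (ModuleCat.ofHom (uB N S T))
  map {T T'} f := Under.homMk (ModuleCat.ofHom (Submodule.mapQ _ _ LinearMap.id
      (le_trans (KB_mono N S (leOfHom f)) (le_of_eq (Submodule.comap_id _).symm))))
    (by ext n; simp [uB, Submodule.mapQ_apply])
  map_id T := by
    apply Under.UnderMorphism.ext
    apply ModuleCat.hom_ext
    apply Submodule.quot_hom_ext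
    intro x
    simp [Submodule.mapQ_apply]
  map_comp f g := by
    apply Under.UnderMorphism.ext
    apply ModuleCat.hom_ext
    apply Submodule.quot_hom_ext
    intro x
    simp [Submodule.mapQ_apply]

noncomputable def coconeB : Cocone (diagB N S) where
  pt := Under.mk (ModuleCat.ofHom N.subtype : ModuleCat.of R ↥N ⟶ ModuleCat.of R M)
  ι :=
    { app := fun T => Under.homMk (ModuleCat.ofHom (vB N S T))
        (by ext n; simp [diagB, uB, vB, piB, Submodule.liftQ_apply])
      naturality := fun T T' f => by
        apply Under.UnderMorphism.ext
        apply ModuleCat.hom_ext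
        apply Submodule.quot_hom_ext
        intro x
        simp [vB, Submodule.mapQ_apply, Submodule.liftQ_apply]
        rfl }
end StepB
section StepB2
variable {R : Type u} [Ring R] {M : Type u} [AddCommGroup M] [Module R M]
  (N : Submodule R M) (S : Finset M)

theorem range_linB : LinearMap.range (linB (R := R) S) = Submodule.span R (↑S : Set M) := by
  rw [linB, Fintype.range_linearCombination]
  congr 1
  simp [Subtype.range_coe_subtype]

theorem piB_surjective (hsp : N ⊔ Submodule.span R (↑S : Set M) = ⊤) :
    Function.Surjective (piB N S) := by
  rw [← LinearMap.range_eq_top, piB, LinearMap.range_coprod, Submodule.range_subtype,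
    range_linB, hsp]

noncomputable def coconeBIsColimit (hsp : N ⊔ Submodule.span R (↑S : Set M) = ⊤) :
    IsColimit (coconeB N S) := by
  classical
  haveI : IsConnected (Finset ↥(LB N S)) := IsFiltered.isConnected _
  apply isColimitOfUnderForget
  haveI : ReflectsColimitsOfShape (Finset ↥(LB N S)) (forget (ModuleCat.{u} R)) :=
    reflectsColimitsOfShape_of_reflectsIsomorphisms
  apply isColimitOfReflects (forget (ModuleCat.{u} R))
  apply Types.FilteredColimit.isColimitOf
  · intro x
    obtain ⟨y, hy⟩ := piB_surjective N S hsp x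
    refine ⟨∅, Submodule.Quotient.mk y, ?_⟩
    show x = vB N S ∅ (Submodule.Quotient.mk y)
    rw [vB, Submodule.liftQ_apply, hy]
  · intro T T' xT xT' h
    obtain ⟨y, rfl⟩ := Submodule.Quotient.mk_surjective _ xT
    obtain ⟨y', rfl⟩ := Submodule.Quotient.mk_surjective _ xT'
    have h' : vB N S T (Submodule.Quotient.mk y) = vB N S T' (Submodule.Quotient.mk y') := h
    rw [vB, vB, Submodule.liftQ_apply, Submodule.liftQ_apply] at h'
    have h0 : piB N S (y - y') = 0 := by rw [map_sub, h', sub_self]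
    have hmemN : (y - y').1.val + linB S (y - y').2 = 0 := by simpa [piB] using h0
    have hlin : linB S (y - y').2 = -((y - y').1.val) :=
      eq_neg_iff_add_eq_zero.2 ((add_comm _ _).trans hmemN)
    have haL : (y - y').2 ∈ LB N S := by
      show qB N S (y - y').2 = 0
      show N.mkQ (linB S (y - y').2) = 0
      rw [hlin, map_neg, Submodule.mkQ_apply, neg_eq_zero, Submodule.Quotient.mk_eq_zero]
      exact (y - y').1.2
    have hκ : κB N S ⟨(y - y').2, haL⟩ = y - y' := by
      refine Prod.ext (Subtype.ext ?_) rfl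
      show -(linB S (y - y').2) = (y - y').1.val
      rw [hlin, neg_neg]
    refine ⟨insert ⟨(y - y').2, haL⟩ (T ∪ T'),
      homOfLE (le_trans Finset.subset_union_left (Finset.subset_insert _ _)),
      homOfLE (le_trans Finset.subset_union_right (Finset.subset_insert _ _)), ?_⟩
    show (Submodule.Quotient.mk y : _ ⧸ KB N S (insert ⟨(y - y').2, haL⟩ (T ∪ T')))
      = Submodule.Quotient.mk y'
    rw [Submodule.Quotient.eq]
    exact Submodule.subset_span ⟨_, by simp, hκ⟩

theorem stepB (hsp : N ⊔ Submodule.span R (↑S : Set M) = ⊤)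
    (hP : KPresentable Cardinal.aleph0
      (Under.mk (ModuleCat.ofHom N.subtype : ModuleCat.of R ↥N ⟶ ModuleCat.of R M))) :
    Module.FinitePresentation R (M ⧸ N) := by
  classical
  obtain ⟨P⟩ := hP (Finset ↥(LB N S)) inferInstance
    (isKappaFiltered_of_isFiltered inferInstance)
  haveI := P
  have h2 : IsColimit ((coyoneda.obj (op (Under.mk (ModuleCat.ofHom N.subtype :
      ModuleCat.of R ↥N ⟶ ModuleCat.of R M)))).mapCocone (coconeB N S)) :=
    isColimitOfPreserves _ (coconeBIsColimit N S hsp)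
  obtain ⟨T, g, hg⟩ := Types.jointly_surjective _ h2 (𝟙 _)
  have hg' : g ≫ (coconeB N S).ι.app T = 𝟙 _ := hg
  let hr : M →ₗ[R] ((↥N × (↥S → R)) ⧸ KB N S T) := g.right.hom
  have hretr : ∀ x : M, vB N S T (hr x) = x := by
    intro x
    have h4 : g.right ≫ ModuleCat.ofHom (vB N S T) = 𝟙 (ModuleCat.of R M) := by
      exact congrArg CommaMorphism.right hg'
    exact LinearMap.congr_fun (congrArg ModuleCat.Hom.hom h4) x
  have hw : ∀ n : ↥N, hr n.val = uB N S T n := by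
    intro n
    have h5 : ModuleCat.ofHom N.subtype ≫ g.right = ModuleCat.ofHom (uB N S T) := by
      simpa [diagB] using Under.w g
    exact LinearMap.congr_fun (congrArg ModuleCat.Hom.hom h5) n
  set ru := LinearMap.range (uB N S T) with hru
  let hbar : (M ⧸ N) →ₗ[R] (((↥N × (↥S → R)) ⧸ KB N S T) ⧸ ru) :=
    Submodule.mapQ N ru hr (fun x hx => by
      show hr x ∈ ru
      exact ⟨⟨x, hx⟩, (hw ⟨x, hx⟩).symm⟩)
  let vbar : ((((↥N × (↥S → R)) ⧸ KB N S T)) ⧸ ru) →ₗ[R] (M ⧸ N) :=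
    Submodule.mapQ ru N (vB N S T) (fun z hz => by
      obtain ⟨n, rfl⟩ := hz
      show vB N S T (uB N S T n) ∈ N
      have : vB N S T (uB N S T n) = n.val := by
        show vB N S T (Submodule.Quotient.mk (LinearMap.inl R ↥N (↥S → R) n)) = n.val
        rw [vB, Submodule.liftQ_apply]
        simp [piB, linB]
      rw [this]; exact n.2)
  have hvh : ∀ w, vbar (hbar w) = w := by
    intro w
    obtain ⟨x, rfl⟩ := Submodule.Quotient.mk_surjective N w
    show vbar (hbar (Submodule.Quotient.mk x)) = Submodule.Quotient.mk x
    simp only [hbar, vbar, Submodule.mapQ_apply, hretr]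
  -- the middle quotient is finitely presented
  let ρ : (↥S → R) →ₗ[R] ((((↥N × (↥S → R)) ⧸ KB N S T)) ⧸ ru) :=
    ru.mkQ ∘ₗ (KB N S T).mkQ ∘ₗ LinearMap.inr R ↥N (↥S → R)
  have hρs : Function.Surjective ρ := by
    intro w
    obtain ⟨z, rfl⟩ := Submodule.Quotient.mk_surjective ru w
    obtain ⟨y, rfl⟩ := Submodule.Quotient.mk_surjective (KB N S T) z
    refine ⟨y.2, ?_⟩
    show (Submodule.Quotient.mk ((KB N S T).mkQ (0, y.2))
      : (((↥N × (↥S → R)) ⧸ KB N S T)) ⧸ ru) = _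
    rw [Submodule.Quotient.eq]
    refine ⟨-y.1, ?_⟩
    have h11 : (0, y.2) - y = LinearMap.inl R ↥N (↥S → R) (-y.1) := by
      ext <;> simp
    show (KB N S T).mkQ (LinearMap.inl R ↥N (↥S → R) (-y.1)) = _
    rw [← h11, map_sub]
    rfl
  have hker : LinearMap.ker ρ
      = Submodule.span R ((fun x : ↥(LB N S) => (x.val : ↥S → R)) '' ↑T) := by
    apply le_antisymm
    · intro a ha
      rw [LinearMap.mem_ker] at ha
      have h6 : ((KB N S T).mkQ (LinearMap.inr R ↥N (↥S → R) a)) ∈ ru :=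
        (Submodule.Quotient.mk_eq_zero ru).1 ha
      obtain ⟨n, hn⟩ := h6
      have h7 : LinearMap.inl R ↥N (↥S → R) n - LinearMap.inr R ↥N (↥S → R) a
          ∈ KB N S T := by
        rw [← Submodule.Quotient.eq]
        exact hn
      have h8 : -a ∈ Submodule.map (LinearMap.snd R ↥N (↥S → R)) (KB N S T) :=
        ⟨_, h7, by simp⟩
      rw [KB, Submodule.map_span, ← Set.image_comp] at h8
      have h9 : (⇑(LinearMap.snd R ↥N (↥S → R)) ∘ κB N S) '' (↑T : Set ↥(LB N S))
          = (fun x : ↥(LB N S) => (x.val : ↥S → R)) '' ↑T := by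
        apply Set.image_congr
        intro x _
        rfl
      rw [h9] at h8
      simpa using neg_mem h8
    · rw [Submodule.span_le]
      rintro _ ⟨x, hxT, rfl⟩
      rw [SetLike.mem_coe, LinearMap.mem_ker]
      show Submodule.Quotient.mk ((KB N S T).mkQ (LinearMap.inr R ↥N (↥S → R) x.val)) = 0
      rw [Submodule.Quotient.mk_eq_zero]
      have hNl : linB S x.val ∈ N := (Submodule.Quotient.mk_eq_zero N).1 x.2
      refine ⟨⟨linB S x.val, hNl⟩, ?_⟩
      show (KB N S T).mkQ (LinearMap.inl R ↥N (↥S → R) ⟨linB S x.val, hNl⟩) = _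
      rw [Submodule.mkQ_apply, Submodule.mkQ_apply, Submodule.Quotient.eq]
      have h10 : LinearMap.inl R ↥N (↥S → R) ⟨linB S x.val, hNl⟩
          - LinearMap.inr R ↥N (↥S → R) x.val = -(κB N S x) := by
        ext <;> simp [κB]
      rw [h10]
      exact neg_mem (Submodule.subset_span ⟨x, hxT, rfl⟩)
  haveI hfpQ : Module.FinitePresentation R ((((↥N × (↥S → R)) ⧸ KB N S T)) ⧸ ru) :=
    Module.finitePresentation_of_surjective ρ hρs
      (by rw [hker]; exact Submodule.fg_span (T.finite_toSet.image _))
  have hsv : Function.Surjective vbar := fun w => ⟨hbar w, hvh w⟩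
  have hkv : LinearMap.ker vbar = LinearMap.range (LinearMap.id - hbar ∘ₗ vbar) := by
    apply le_antisymm
    · intro z hz
      rw [LinearMap.mem_ker] at hz
      exact ⟨z, by simp [LinearMap.sub_apply, hz]⟩
    · rintro _ ⟨z, rfl⟩
      rw [LinearMap.mem_ker]
      simp [LinearMap.sub_apply, hvh]
  exact Module.finitePresentation_of_surjective vbar hsv
    (by rw [hkv, LinearMap.range_eq_map]; exact Submodule.FG.map _ Module.Finite.fg_top)
end StepB2
section Backward
variable {R : Type u} [Ring R] {M : Type u} [AddCommGroup M] [Module R M] (N : Submodule R M)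

theorem fp_kpresentable (hfp : Module.FinitePresentation R (M ⧸ N)) :
    KPresentable Cardinal.aleph0
      (Under.mk (ModuleCat.ofHom N.subtype :
        ModuleCat.of R ↥N ⟶ ModuleCat.of R M)) := by
  classical
  -- generators for M ⧸ N and their lifts
  obtain ⟨sb, hsb⟩ := Module.Finite.fg_top (R := R) (M := M ⧸ N)
  have hex : ∀ xb : M ⧸ N, ∃ x : M, N.mkQ x = xb := Submodule.mkQ_surjective N
  choose lift hlift using hex
  let m : ↥sb → M := fun i => lift i.val
  let lin : (↥sb → R) →ₗ[R] M := Fintype.linearCombination R m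
  have himg : (↑sb : Set (M ⧸ N)) ⊆ ⇑N.mkQ '' Set.range m := fun xb hxb =>
    ⟨m ⟨xb, hxb⟩, ⟨⟨xb, hxb⟩, rfl⟩, hlift xb⟩
  have hspan : ∀ x : M, x ∈ N ⊔ Submodule.span R (Set.range m) := by
    intro x
    have h1 : N.mkQ x ∈ Submodule.span R (⇑N.mkQ '' Set.range m) :=
      Submodule.span_mono himg (hsb ▸ Submodule.mem_top)
    rw [← Submodule.map_span] at h1
    obtain ⟨y, hy, hyx⟩ := h1
    have h2 : x - y ∈ N := by
      rw [← Submodule.Quotient.mk_eq_zero N, Submodule.Quotient.mk_sub]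
      show N.mkQ x - N.mkQ y = 0
      rw [hyx, sub_self]
    have h3 : x - y + y ∈ N ⊔ Submodule.span R (Set.range m) :=
      add_mem (Submodule.mem_sup_left h2) (Submodule.mem_sup_right hy)
    simpa using h3
  have hspan' : Submodule.span R ((↑N : Set M) ∪ Set.range m) = ⊤ := by
    rw [Submodule.span_union, Submodule.span_eq]
    exact Submodule.eq_top_iff'.2 hspan
  let q : (↥sb → R) →ₗ[R] M ⧸ N := N.mkQ ∘ₗ lin
  have hq : Function.Surjective q := by
    intro xb
    have h1 : xb ∈ Submodule.span R (⇑N.mkQ '' Set.range m) :=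
      Submodule.span_mono himg (hsb ▸ Submodule.mem_top)
    rw [← Submodule.map_span] at h1
    obtain ⟨y, hy, rfl⟩ := h1
    have hrange : LinearMap.range lin = Submodule.span R (Set.range m) :=
      Fintype.range_linearCombination R m
    rw [← hrange] at hy
    obtain ⟨a, rfl⟩ := hy
    exact ⟨a, rfl⟩
  obtain ⟨e, he⟩ : (LinearMap.ker q).FG := Module.FinitePresentation.fg_ker q hq
  have hlinN : ∀ x ∈ Submodule.span R (↑e : Set (↥sb → R)), lin x ∈ N := by
    intro x hx
    rw [he, LinearMap.mem_ker] at hx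
    have hx' : N.mkQ (lin x) = 0 := hx
    rwa [Submodule.mkQ_apply, Submodule.Quotient.mk_eq_zero] at hx'
  -- the main loop
  intro J _ hJ
  haveI : IsFiltered J := isFiltered_of_isKappaFiltered hJ
  haveI : IsConnected J := IsFiltered.isConnected _
  refine ⟨⟨fun {F} => ⟨fun {c} hc => ?_⟩⟩⟩
  have hc1 : IsColimit ((Under.forget _).mapCocone c) := underForgetMapCoconeIsColimit hc
  have hc2 : IsColimit ((forget (ModuleCat.{u} R)).mapCocone
      ((Under.forget _).mapCocone c)) := isColimitOfPreserves _ hc1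
  let Cj : J → ModuleCat.{u} R := fun j => (F.obj j).right
  let uj : ∀ j, ↥N →ₗ[R] Cj j := fun j => (F.obj j).hom.hom
  let vj : ∀ j, Cj j →ₗ[R] c.pt.right := fun j => (c.ι.app j).right.hom
  let Wf : ∀ {i j : J}, (i ⟶ j) → (Cj i →ₗ[R] Cj j) := fun f => (F.map f).right.hom
  have huv : ∀ (j : J) (n : ↥N), vj j (uj j n) = c.pt.hom n := by
    intro j n
    exact LinearMap.congr_fun (congrArg ModuleCat.Hom.hom (under_cocone_w (F := F) (c := c) j)) n
  have hWu : ∀ {i j : J} (f : i ⟶ j) (n : ↥N), Wf f (uj i n) = uj j n := by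
    intro i j f n
    exact LinearMap.congr_fun (congrArg ModuleCat.Hom.hom (Under.w (F.map f))) n
  have hnat : ∀ {i j : J} (f : i ⟶ j) (x : Cj i), vj j (Wf f x) = vj i x := by
    intro i j f x
    exact LinearMap.congr_fun (congrArg ModuleCat.Hom.hom (congrArg CommaMorphism.right (c.w f))) x
  have hWcomp : ∀ {i j k : J} (f : i ⟶ j) (g : j ⟶ k) (x : Cj i),
      Wf (f ≫ g) x = Wf g (Wf f x) := by
    intro i j k f g x
    exact LinearMap.congr_fun (congrArg ModuleCat.Hom.hom (congrArg CommaMorphism.right (F.map_comp f g))) x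
  have hjs : ∀ x : (c.pt.right : Type u), ∃ (j : J) (y : Cj j), vj j y = x := by
    intro x
    obtain ⟨j, y, hy⟩ := Types.jointly_surjective _ hc2 x
    exact ⟨j, y, hy⟩
  have heq : ∀ {i j : J} (xi : Cj i) (xj : Cj j), vj i xi = vj j xj →
      ∃ (k : J) (f : i ⟶ k) (g : j ⟶ k), Wf f xi = Wf g xj := by
    intro i j xi xj hx
    exact (Types.FilteredColimit.isColimit_eq_iff _ hc2
      (xi := xi) (xj := xj)).1 hx
  refine ⟨?_⟩
  apply Types.FilteredColimit.isColimitOf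
  · -- surjectivity: every map factors through a stage
    intro g
    have hg : ∀ n : ↥N, g.right n.val = c.pt.hom n := by
      intro n
      have h := LinearMap.congr_fun (congrArg ModuleCat.Hom.hom (Under.w g)) n
      simpa using h
    have hx : ∀ i : ↥sb, ∃ (j : J) (y : Cj j), vj j y = g.right (m i) :=
      fun i => hjs _
    choose jf yf hyf using hx
    obtain ⟨j₀, hj₀⟩ := IsFiltered.sup_objs_exists (Finset.univ.image jf)
    let tt : ∀ i : ↥sb, jf i ⟶ j₀ :=
      fun i => (hj₀ (Finset.mem_image_of_mem jf (Finset.mem_univ i))).some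
    let z : ↥sb → Cj j₀ := fun i => Wf (tt i) (yf i)
    have hz : ∀ i, vj j₀ (z i) = g.right (m i) := by
      intro i
      show vj j₀ (Wf (tt i) (yf i)) = _
      rw [hnat]
      exact hyf i
    let Th : (↥sb → R) →ₗ[R] Cj j₀ := Fintype.linearCombination R z
    have hvTh : ∀ x : ↥sb → R, vj j₀ (Th x) = g.right (lin x) := by
      intro x
      show vj j₀ (Fintype.linearCombination R z x)
        = g.right (Fintype.linearCombination R m x)
      rw [Fintype.linearCombination_apply, Fintype.linearCombination_apply,
        map_sum, map_sum]
      refine Finset.sum_congr rfl fun i _ => ?_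
      rw [map_smul, map_smul, hz]
    have hvD : ∀ (x : ↥sb → R) (hxN : lin x ∈ N),
        vj j₀ (uj j₀ ⟨lin x, hxN⟩ - Th x) = 0 := by
      intro x hxN
      rw [map_sub, hvTh, huv, ← hg ⟨lin x, hxN⟩, sub_self]
    have key : ∀ e' : Finset (↥sb → R), ∃ (j₁ : J) (h : j₀ ⟶ j₁),
        ∀ x ∈ e', ∀ (hxN : lin x ∈ N), Wf h (uj j₀ ⟨lin x, hxN⟩ - Th x) = 0 := by
      intro e'
      induction e' using Finset.induction_on with
      | empty => exact ⟨j₀, 𝟙 j₀, by simp⟩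
      | @insert a e'' ha ih =>
        obtain ⟨j₁, h, ih⟩ := ih
        by_cases haN : lin a ∈ N
        · have h1 : vj j₁ (Wf h (uj j₀ ⟨lin a, haN⟩ - Th a)) = vj j₁ 0 := by
            rw [hnat, hvD a haN, map_zero]
          obtain ⟨k, f, f', hf⟩ := heq _ _ h1
          refine ⟨k, h ≫ f, ?_⟩
          intro x hx hxN
          rcases Finset.mem_insert.1 hx with rfl | hx'
          · rw [hWcomp, hf, map_zero]
          · rw [hWcomp, ih x hx' hxN, map_zero]
        · refine ⟨j₁, h, ?_⟩
          intro x hx hxN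
          rcases Finset.mem_insert.1 hx with rfl | hx'
          · exact absurd hxN haN
          · exact ih x hx' hxN
    obtain ⟨j₁, h, hkey⟩ := key e
    let z1 : ↥sb → Cj j₁ := fun i => Wf h (z i)
    let Th1 : (↥sb → R) →ₗ[R] Cj j₁ := Fintype.linearCombination R z1
    have hTh1 : ∀ x, Wf h (Th x) = Th1 x := by
      intro x
      show Wf h (Fintype.linearCombination R z x)
        = Fintype.linearCombination R z1 x
      rw [Fintype.linearCombination_apply, Fintype.linearCombination_apply, map_sum]
      refine Finset.sum_congr rfl fun i _ => ?_
      rw [map_smul]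
    have hgen : ∀ x ∈ Submodule.span R (↑e : Set (↥sb → R)), ∀ (hxN : lin x ∈ N),
        uj j₁ ⟨lin x, hxN⟩ = Th1 x := by
      intro x hx
      induction hx using Submodule.span_induction with
      | mem x hx =>
        intro hxN
        have h2 := hkey x hx hxN
        rw [map_sub, sub_eq_zero] at h2
        rw [← hWu h ⟨lin x, hxN⟩, h2, hTh1]
      | zero =>
        intro h0
        have h2 : (⟨lin 0, h0⟩ : ↥N) = 0 := Subtype.ext (by simp)
        rw [h2, map_zero, map_zero]
      | add x y hxs hys ihx ihy =>
        intro hxy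
        have hxN : lin x ∈ N := hlinN x hxs
        have hyN : lin y ∈ N := hlinN y hys
        have h2 : (⟨lin (x + y), hxy⟩ : ↥N) = ⟨lin x, hxN⟩ + ⟨lin y, hyN⟩ :=
          Subtype.ext (by simp)
        rw [h2, map_add, ihx hxN, ihy hyN, map_add]
      | smul r x hxs ihx =>
        intro hrx
        have hxN : lin x ∈ N := hlinN x hxs
        have h2 : (⟨lin (r • x), hrx⟩ : ↥N) = r • ⟨lin x, hxN⟩ :=
          Subtype.ext (by simp)
        rw [h2, map_smul, ihx hxN, map_smul]
    let φ : (↥N × (↥sb → R)) →ₗ[R] Cj j₁ := (uj j₁).coprod Th1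
    let pihat : (↥N × (↥sb → R)) →ₗ[R] M := N.subtype.coprod lin
    have hpis : Function.Surjective pihat := by
      intro x
      have hsup := hspan x
      rw [Submodule.mem_sup] at hsup
      obtain ⟨n, hn, y, hy, hxy⟩ := hsup
      have hrange : LinearMap.range lin = Submodule.span R (Set.range m) :=
        Fintype.range_linearCombination R m
      rw [← hrange] at hy
      obtain ⟨a, rfl⟩ := hy
      exact ⟨(⟨n, hn⟩, a), hxy⟩
    have hker : LinearMap.ker pihat ≤ LinearMap.ker φ := by
      rintro ⟨n, a⟩ hna
      rw [LinearMap.mem_ker] at hna ⊢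
      have hna' : (n : M) + lin a = 0 := hna
      have haN : lin a ∈ N := by
        have h2 : lin a = -(n : M) :=
          eq_neg_iff_add_eq_zero.2 ((add_comm _ _).trans hna')
        rw [h2]; exact neg_mem n.2
      have haL : a ∈ Submodule.span R (↑e : Set (↥sb → R)) := by
        rw [he, LinearMap.mem_ker]
        show N.mkQ (lin a) = 0
        rw [Submodule.mkQ_apply, Submodule.Quotient.mk_eq_zero]
        exact haN
      have h1 : uj j₁ ⟨lin a, haN⟩ = Th1 a := hgen a haL haN
      have hn2 : n = -(⟨lin a, haN⟩ : ↥N) := Subtype.ext (by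
        show (n : M) = -(lin a)
        exact eq_neg_of_add_eq_zero_left hna')
      show uj j₁ n + Th1 a = 0
      rw [hn2, map_neg, h1, neg_add_cancel]
    let ψ : M →ₗ[R] Cj j₁ :=
      (Submodule.liftQ (LinearMap.ker pihat) φ hker) ∘ₗ
        ((LinearMap.quotKerEquivOfSurjective pihat hpis).symm :
          M →ₗ[R] (↥N × (↥sb → R)) ⧸ LinearMap.ker pihat)
    have hψ : ∀ p, ψ (pihat p) = φ p := by
      intro p
      have h1 : (LinearMap.quotKerEquivOfSurjective pihat hpis)
          (Submodule.Quotient.mk p) = pihat p := by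
        simp [LinearMap.quotKerEquivOfSurjective]
      have h2 : (LinearMap.quotKerEquivOfSurjective pihat hpis).symm (pihat p)
          = Submodule.Quotient.mk p := by
        rw [← h1, LinearEquiv.symm_apply_apply]
      show (Submodule.liftQ (LinearMap.ker pihat) φ hker)
        ((LinearMap.quotKerEquivOfSurjective pihat hpis).symm (pihat p)) = φ p
      rw [h2, Submodule.liftQ_apply]
    have hψn : ∀ n : ↥N, ψ n.val = uj j₁ n := by
      intro n
      have h1 := hψ (n, 0)
      have h2 : pihat (n, 0) = n.val := by
        show (n : M) + lin 0 = n.val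
        rw [map_zero, add_zero]
      have h3 : φ (n, 0) = uj j₁ n := by
        show uj j₁ n + Th1 0 = uj j₁ n
        rw [map_zero, add_zero]
      rw [h2, h3] at h1
      exact h1
    have hψm : ∀ i : ↥sb, ψ (m i) = z1 i := by
      intro i
      have h1 := hψ (0, Pi.single i 1)
      have h2 : pihat (0, Pi.single i 1) = m i := by
        show (0 : ↥N).val + lin (Pi.single i 1) = m i
        show (0 : ↥N).val + Fintype.linearCombination R m (Pi.single i 1) = m i
        rw [Fintype.linearCombination_apply_single]
        simp
      have h3 : φ (0, Pi.single i 1) = z1 i := by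
        show uj j₁ 0 + Th1 (Pi.single i 1) = z1 i
        show uj j₁ 0 + Fintype.linearCombination R z1 (Pi.single i 1) = z1 i
        rw [Fintype.linearCombination_apply_single]
        simp
      rw [h2, h3] at h1
      exact h1
    have hwψ : (Under.mk (ModuleCat.ofHom N.subtype :
        ModuleCat.of R ↥N ⟶ ModuleCat.of R M)).hom ≫ ModuleCat.ofHom ψ
        = (F.obj j₁).hom := by
      ext n
      exact hψn n
    refine ⟨j₁, Under.homMk (ModuleCat.ofHom ψ) hwψ, ?_⟩
    show g = Under.homMk (ModuleCat.ofHom ψ) hwψ ≫ c.ι.app j₁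
    apply Under.UnderMorphism.ext
    apply ModuleCat.hom_ext
    apply LinearMap.ext_on hspan'
    rintro x (hxM | ⟨i, rfl⟩)
    · show g.right x = vj j₁ (ψ x)
      rw [show ψ x = ψ ((⟨x, hxM⟩ : ↥N) : M) from rfl, hψn ⟨x, hxM⟩, huv]
      exact hg ⟨x, hxM⟩
    · show g.right (m i) = vj j₁ (ψ (m i))
      rw [hψm i]
      show g.right (m i) = vj j₁ (Wf h (z i))
      rw [hnat, hz]
  · -- injectivity
    intro i j xi xj hx
    have hx' : xi ≫ c.ι.app i = xj ≫ c.ι.app j := hx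
    obtain ⟨k₀, f₀, g₀, -⟩ := IsFilteredOrEmpty.cocone_objs i j
    have hαβ : (xi ≫ F.map f₀) ≫ c.ι.app k₀ = (xj ≫ F.map g₀) ≫ c.ι.app k₀ := by
      rw [Category.assoc, Category.assoc, c.w f₀, c.w g₀]
      exact hx'
    have hd : ∀ i' : ↥sb,
        vj k₀ ((xi ≫ F.map f₀).right (m i') - (xj ≫ F.map g₀).right (m i')) = 0 := by
      intro i'
      have h := LinearMap.congr_fun (congrArg ModuleCat.Hom.hom (congrArg CommaMorphism.right hαβ)) (m i')
      simp only [Under.comp_right] at h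
      rw [map_sub]
      have h1 : vj k₀ ((xi ≫ F.map f₀).right (m i'))
          = vj k₀ ((xj ≫ F.map g₀).right (m i')) := by simpa using h
      rw [h1, sub_self]
    have key2 : ∀ s' : Finset ↥sb, ∃ (k₁ : J) (h : k₀ ⟶ k₁), ∀ i' ∈ s',
        Wf h ((xi ≫ F.map f₀).right (m i') - (xj ≫ F.map g₀).right (m i')) = 0 := by
      intro s'
      induction s' using Finset.induction_on with
      | empty => exact ⟨k₀, 𝟙 k₀, by simp⟩
      | @insert a s'' ha ih =>
        obtain ⟨k₁, h, ih⟩ := ih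
        have h1 : vj k₁ (Wf h ((xi ≫ F.map f₀).right (m a)
            - (xj ≫ F.map g₀).right (m a))) = vj k₁ 0 := by
          rw [hnat, hd a, map_zero]
        obtain ⟨k, f, f', hf⟩ := heq _ _ h1
        refine ⟨k, h ≫ f, ?_⟩
        intro x hxm
        rcases Finset.mem_insert.1 hxm with rfl | hx'
        · rw [hWcomp, hf, map_zero]
        · rw [hWcomp, ih x hx', map_zero]
    obtain ⟨k₁, h, hkill⟩ := key2 Finset.univ
    refine ⟨k₁, f₀ ≫ h, g₀ ≫ h, ?_⟩
    show xi ≫ F.map (f₀ ≫ h) = xj ≫ F.map (g₀ ≫ h)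
    rw [F.map_comp, F.map_comp, ← Category.assoc, ← Category.assoc]
    apply Under.UnderMorphism.ext
    apply ModuleCat.hom_ext
    apply LinearMap.ext_on hspan'
    rintro x (hxM | ⟨i', rfl⟩)
    · show Wf h ((xi ≫ F.map f₀).right x) = Wf h ((xj ≫ F.map g₀).right x)
      have h1 : (xi ≫ F.map f₀).right x = uj k₀ ⟨x, hxM⟩ := by
        have := LinearMap.congr_fun (congrArg ModuleCat.Hom.hom (Under.w (xi ≫ F.map f₀))) ⟨x, hxM⟩
        simpa using this
      have h2 : (xj ≫ F.map g₀).right x = uj k₀ ⟨x, hxM⟩ := by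
        have := LinearMap.congr_fun (congrArg ModuleCat.Hom.hom (Under.w (xj ≫ F.map g₀))) ⟨x, hxM⟩
        simpa using this
      rw [h1, h2]
    · show Wf h ((xi ≫ F.map f₀).right (m i')) = Wf h ((xj ≫ F.map g₀).right (m i'))
      have := hkill i' (Finset.mem_univ i')
      rw [map_sub, sub_eq_zero] at this
      exact this
end Backward

/-- In the category of `R`-modules, the inclusion of a submodule `N ≤ M` is a finitely
presentable morphism (a finitely presentable object of `(N ↓ Mod-R)`) iff the quotient
`M ⧸ N` is a finitely presentable module. -/
theorem submodule_inclusion_finitelyPresentable_iff {R : Type u} [Ring R]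
    {M : Type u} [AddCommGroup M] [Module R M] (N : Submodule R M) :
    KPresentable Cardinal.aleph0
      (Under.mk (ModuleCat.ofHom N.subtype :
        ModuleCat.of R N ⟶ ModuleCat.of R M)) ↔
    Module.FinitePresentation R (M ⧸ N) := by
  constructor
  · intro hP
    obtain ⟨S, hS⟩ := stepA N hP
    exact stepB N S hS hP
  · exact fp_kpresentable N
end

section
/- Let C be a locally λ-presentable category and let X --e--> Z --g--> Y be morphisms with e a strong epimorphism. If the composite g∘e : X → Y is a λ-presentable morphism (λ-presentable object of (X ↓ C)), then g is a λ-presentable morphism (λ-presentable object of (Z ↓ C)). -/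
universe v u

open CategoryTheory Limits Opposite

section Aux

variable {J : Type v} [SmallCategory J] {C : Type u} [Category.{v} C] {B : C}

/-- dual of Over.CreatesConnected.raiseCone -/
@[simps]
noncomputable def raiseCocone [IsConnected J] {F : J ⥤ Under B} (c : Cocone (F ⋙ Under.forget B)) :
    Cocone F where
  pt := Under.mk ((F.obj (Classical.arbitrary J)).hom ≫ c.ι.app (Classical.arbitrary J))
  ι :=
    { app := fun j => Under.homMk (c.ι.app j) (by
        have := constant_of_preserves_morphisms
          (fun j : J => (F.obj j).hom ≫ c.ι.app j)
          (fun i j f => by beta_reduce; rw [← c.w f]; dsimp; exact (Category.assoc _ _ _).symm.trans (congrArg (· ≫ c.ι.app j) (Under.w (F.map f))))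
          j (Classical.arbitrary J)
        simpa using this)
      naturality := by
        intro i j f
        apply CategoryTheory.CommaMorphism.ext
        · rfl
        · exact (c.w f).trans (Category.comp_id _).symm }

noncomputable def raisedCoconeIsColimit [IsConnected J] {F : J ⥤ Under B}
    {c : Cocone (F ⋙ Under.forget B)} (t : IsColimit c) : IsColimit (raiseCocone c) where
  desc s := Under.homMk (t.desc ((Under.forget B).mapCocone s)) (by
      erw [Category.assoc, t.fac ((Under.forget B).mapCocone s) (Classical.arbitrary J)]
      exact Under.w (s.ι.app (Classical.arbitrary J)))
  fac s j := by
    ext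
    exact t.fac ((Under.forget B).mapCocone s) j
  uniq s m K := by
    ext1
    apply t.hom_ext
    intro j
    exact (congrArg CommaMorphism.right (K j)).trans (t.fac ((Under.forget B).mapCocone s) j).symm

noncomputable instance underForgetCreatesConnectedColimits [IsConnected J] :
    CreatesColimitsOfShape J (Under.forget B) where
  CreatesColimit :=
    createsColimitOfReflectsIso fun c t =>
      { liftedCocone := raiseCocone c
        validLift := Cocones.ext (Iso.refl _) (by intro j; exact Category.comp_id (c.ι.app j))
        makesColimit := raisedCoconeIsColimit t }

noncomputable def underMapPreservesConnectedColimits [IsConnected J] [HasColimitsOfShape J C]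
    {X Z : C} (e : X ⟶ Z) : PreservesColimitsOfShape J (Under.map e) where
  preservesColimit {F} := ⟨fun {c} hc => by
    haveI : PreservesColimitsOfShape J (Under.forget Z) :=
      preservesColimitOfShape_of_createsColimitsOfShape_and_hasColimitsOfShape _
    have h1 : IsColimit ((Under.forget Z).mapCocone c) := isColimitOfPreserves _ hc
    exact ⟨isColimitOfReflects (Under.forget X)
      (h1.ofIsoColimit (Cocones.ext (Iso.refl _) (by intro j; simp)))⟩⟩

end Aux

/-- In a locally `κ`-presentable category, if `e` is a strong epimorphism and `e ≫ g` is a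
`κ`-presentable morphism, then `g` is a `κ`-presentable morphism. -/
theorem presentable_of_comp_strongEpi {C : Type u} [Category.{v} C] {κ : Cardinal.{v}}
    (h : LocallyPresentable C κ) {X Z Y : C} (e : X ⟶ Z) (g : Z ⟶ Y) (he : StrongEpi e)
    (hge : KPresentable κ (Under.mk (e ≫ g))) :
    KPresentable κ (Under.mk g) := by
  haveI := he
  haveI : Epi e := inferInstance
  obtain ⟨hreg, hcolim, -⟩ := h
  haveI := hcolim
  intro J _ hJ
  have hfil : IsFiltered J := by
    refine IsFiltered.of_cocone_nonempty.{v} J ?_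
    intro K _ _ F
    refine hJ K _ ?_ F
    haveI : Fintype K := FinCategory.fintypeObj
    haveI : ∀ a b : K, Fintype (a ⟶ b) := fun a b => FinCategory.fintypeHom a b
    exact lt_of_lt_of_le (Cardinal.lt_aleph0_of_finite _) hreg.aleph0_le
  haveI : IsConnected J := IsFiltered.isConnected J
  obtain ⟨hp⟩ := hge J _ hJ
  haveI := hp
  haveI : PreservesColimitsOfShape J (Under.map e) := underMapPreservesConnectedColimits e
  haveI : PreservesColimitsOfShape J (Under.map e ⋙ coyoneda.obj (op (Under.mk (e ≫ g)))) :=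
    inferInstance
  refine ⟨preservesColimitsOfShape_of_natIso (F := Under.map e ⋙ coyoneda.obj (op (Under.mk (e ≫ g)))) ?_⟩
  refine NatIso.ofComponents (fun W => Equiv.toIso
    { toFun := fun u => Under.homMk u.right (by
        have := Under.w u
        dsimp at this ⊢
        replace this := (Category.assoc _ _ _).symm.trans this
        exact (cancel_epi e).mp this)
      invFun := fun u => Under.homMk u.right (by
        have := Under.w u
        dsimp at this ⊢
        rw [Category.assoc, this])
      left_inv := fun u => Under.UnderMorphism.ext rfl
      right_inv := fun u => Under.UnderMorphism.ext rfl }) ?_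
  intro W W' f
  ext u : 3
  exact Under.UnderMorphism.ext (X := Z) (U := Under.mk g) (V := W') rfl
end

section
/- Let C be a locally λ-presentable category in which the class of monomorphisms is stable under pushouts (transferability property). If an object M of C is both λ-injective (injective with respect to all λ-presentable monomorphisms) and λ-pure-injective (injective with respect to all λ-pure monomorphisms), then M is injective with respect to all monomorphisms. -/
universe v u

open CategoryTheory Limits Opposite

section Aux

variable {J : Type v} [SmallCategory J]

/-- Any functor from a finite (ordinary) category into a `κ`-filtered category admits
a cocone. -/
lemma nonempty_cocone_of_finite {κ : Cardinal.{v}} (hreg : κ.IsRegular)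
    (hJ : IsKappaFiltered J κ) {K₀ : Type} [SmallCategory K₀]
    (hfin : Finite (Σ (a : K₀) (b : K₀), a ⟶ b)) (F₀ : K₀ ⥤ J) :
    Nonempty (Cocone F₀) := by
  have e : (Σ (a : AsSmall.{v} K₀) (b : AsSmall.{v} K₀), a ⟶ b) ≃
      (Σ (a : K₀) (b : K₀), a ⟶ b) :=
    { toFun := fun x => ⟨ULift.down x.1, ULift.down x.2.1, x.2.2.down⟩
      invFun := fun x => ⟨ULift.up x.1, ULift.up x.2.1, ⟨x.2.2⟩⟩
      left_inv := fun x => rfl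
      right_inv := fun x => rfl }
  have hcard : Cardinal.mk (Σ (a : AsSmall.{v} K₀) (b : AsSmall.{v} K₀), a ⟶ b) < κ := by
    haveI : Finite (Σ (a : AsSmall.{v} K₀) (b : AsSmall.{v} K₀), a ⟶ b) :=
      Finite.of_equiv _ e.symm
    exact lt_of_lt_of_le (Cardinal.lt_aleph0_of_finite _) hreg.aleph0_le
  obtain ⟨c⟩ := hJ _ _ hcard (AsSmall.down ⋙ F₀)
  exact ⟨{ pt := c.pt
           ι := { app := fun a => c.ι.app (AsSmall.up.obj a)
                  naturality := fun a b f => c.ι.naturality (AsSmall.up.map f) } }⟩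

/-- A `κ`-filtered category (κ regular) is filtered. -/
lemma isFiltered_of_isKappaFiltered_s11 {κ : Cardinal.{v}} (hreg : κ.IsRegular)
    (hJ : IsKappaFiltered J κ) : IsFiltered J := by
  have hne : Nonempty J := by
    have hfin : Finite (Σ (a : Discrete PEmpty.{1}) (b : Discrete PEmpty.{1}), a ⟶ b) := by
      haveI : IsEmpty (Σ (a : Discrete PEmpty.{1}) (b : Discrete PEmpty.{1}), a ⟶ b) :=
        ⟨fun x => x.1.as.elim⟩
      infer_instance
    obtain ⟨c⟩ := nonempty_cocone_of_finite hreg hJ hfin (Functor.empty J)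
    exact ⟨c.pt⟩
  have hobjs : ∀ X Y : J, ∃ (Z : J) (_ : X ⟶ Z) (_ : Y ⟶ Z), True := by
    intro X Y
    have hfin : Finite (Σ (a : Discrete WalkingPair) (b : Discrete WalkingPair), a ⟶ b) := by
      haveI : Finite (Discrete WalkingPair) :=
        Finite.of_equiv _ (CategoryTheory.discreteEquiv (α := WalkingPair)).symm
      infer_instance
    obtain ⟨c⟩ := nonempty_cocone_of_finite hreg hJ hfin (pair X Y)
    exact ⟨c.pt, c.ι.app ⟨WalkingPair.left⟩, c.ι.app ⟨WalkingPair.right⟩, trivial⟩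
  have hmaps : ∀ ⦃X Y : J⦄ (f g : X ⟶ Y), ∃ (Z : J) (h : Y ⟶ Z), f ≫ h = g ≫ h := by
    intro X Y f g
    have hfin : Finite (Σ (a : WalkingParallelPair) (b : WalkingParallelPair), a ⟶ b) := by
      apply Finite.of_surjective (f := fun p : Bool × Bool =>
        (match p with
          | (false, false) => ⟨_, _, WalkingParallelPairHom.left⟩
          | (false, true) => ⟨_, _, WalkingParallelPairHom.right⟩
          | (true, false) => ⟨_, _, WalkingParallelPairHom.id WalkingParallelPair.zero⟩
          | (true, true) => ⟨_, _, WalkingParallelPairHom.id WalkingParallelPair.one⟩ :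
          Σ (a : WalkingParallelPair) (b : WalkingParallelPair), a ⟶ b))
      rintro ⟨a, b, x⟩
      change WalkingParallelPairHom a b at x
      cases x with
      | left => exact ⟨(false, false), rfl⟩
      | right => exact ⟨(false, true), rfl⟩
      | id _ =>
        cases a with
        | zero => exact ⟨(true, false), rfl⟩
        | one => exact ⟨(true, true), rfl⟩
    obtain ⟨c⟩ := nonempty_cocone_of_finite hreg hJ hfin (parallelPair f g)
    refine ⟨c.pt, c.ι.app WalkingParallelPair.one, ?_⟩
    have h1 := c.w WalkingParallelPairHom.left
    have h2 := c.w WalkingParallelPairHom.right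
    simp only [parallelPair_map_left, parallelPair_map_right] at h1 h2
    rw [h1, h2]
  exact { toIsFilteredOrEmpty := ⟨hobjs, hmaps⟩, nonempty := hne }

variable {C : Type u} [Category.{v} C]

/-- For a connected index category, the forgetful functor `Under M ⥤ C` preserves
colimit cocones. -/
noncomputable def underForgetIsColimit {M : C} [IsConnected J]
    {F : J ⥤ Under M} {c : Cocone F} (hc : IsColimit c) :
    IsColimit ((Under.forget M).mapCocone c) := by
  have hconst : ∀ (s : Cocone (F ⋙ Under.forget M)) (j j' : J),
      (F.obj j).hom ≫ s.ι.app j = (F.obj j').hom ≫ s.ι.app j' := by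
    intro s
    apply constant_of_preserves_morphisms (fun j => (F.obj j).hom ≫ s.ι.app j)
    intro j j' f
    conv_lhs => rw [← s.w f]
    exact (Category.assoc _ _ _).symm.trans (congrArg (· ≫ s.ι.app j') (Under.w (F.map f)))
  letI j₀ := Classical.arbitrary J
  let lift : ∀ s : Cocone (F ⋙ Under.forget M), Cocone F := fun s =>
    { pt := Under.mk ((F.obj j₀).hom ≫ s.ι.app j₀)
      ι := { app := fun j => Under.homMk (s.ι.app j) (hconst s j j₀)
             naturality := fun j j' f => by
               apply Under.UnderMorphism.ext
               exact (s.w f).trans (Category.comp_id _).symm } }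
  have hm : ∀ (s : Cocone (F ⋙ Under.forget M)) (m : c.pt.right ⟶ s.pt),
      (∀ j, (c.ι.app j).right ≫ m = s.ι.app j) → m = (hc.desc (lift s)).right := by
    intro s m hm'
    have hw : c.pt.hom ≫ m = (F.obj j₀).hom ≫ s.ι.app j₀ := by
      have hw0 : (F.obj j₀).hom ≫ (c.ι.app j₀).right = c.pt.hom := Under.w (c.ι.app j₀)
      rw [← hw0, Category.assoc, hm' j₀]
    have huniq := hc.uniq (lift s) (Under.homMk m hw)
      (fun j => by
        apply Under.UnderMorphism.ext
        exact hm' j)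
    calc m = (Under.homMk m hw : c.pt ⟶ (lift s).pt).right := rfl
      _ = (hc.desc (lift s)).right := by rw [huniq]
  refine { desc := fun s => (hc.desc (lift s)).right, fac := ?_, uniq := ?_ }
  · intro s j
    show (c.ι.app j).right ≫ (hc.desc (lift s)).right = s.ι.app j
    rw [← Under.comp_right, hc.fac]
    rfl
  · intro s m hm'
    exact hm s m (fun j => hm' j)

/-- The pushout of a span between `κ`-presentable objects is a `κ`-presentable object of
the under category. -/
lemma kPresentable_pushout [HasPushouts C] {κ : Cardinal.{v}}
    (hreg : κ.IsRegular) {P Q M : C} (z : P ⟶ Q) (u : P ⟶ M)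
    (hP : KPresentable κ P) (hQ : KPresentable κ Q) :
    KPresentable κ (Under.mk (pushout.inl u z)) := by
  intro J instJ hJ
  haveI : IsFiltered J := isFiltered_of_isKappaFiltered_s11 hreg hJ
  haveI : IsConnected J := IsFiltered.isConnected J
  haveI := (hP J instJ hJ).some
  haveI := (hQ J instJ hJ).some
  refine ⟨{ preservesColimit := fun {F} => ⟨fun {c} hc => ⟨?_⟩⟩ }⟩
  have hcG : IsColimit ((Under.forget M).mapCocone c) := underForgetIsColimit hc
  have hPc := isColimitOfPreserves (coyoneda.obj (op P)) hcG
  have hQc := isColimitOfPreserves (coyoneda.obj (op Q)) hcG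
  apply Types.FilteredColimit.isColimitOf
  · -- joint surjectivity
    intro x
    obtain ⟨j, k₀, hk₀⟩ := Types.jointly_surjective_of_isColimit hQc
      (pushout.inr u z ≫ x.right)
    have hk₀' : k₀ ≫ (c.ι.app j).right = pushout.inr u z ≫ x.right := hk₀
    have heq : ((coyoneda.obj (op P)).mapCocone ((Under.forget M).mapCocone c)).ι.app j
          (z ≫ k₀) =
        ((coyoneda.obj (op P)).mapCocone ((Under.forget M).mapCocone c)).ι.app j
          (u ≫ (F.obj j).hom) := by
      show (z ≫ k₀) ≫ (c.ι.app j).right = (u ≫ (F.obj j).hom) ≫ (c.ι.app j).right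
      have hwx : pushout.inl u z ≫ x.right = c.pt.hom := Under.w x
      have hwj : (F.obj j).hom ≫ (c.ι.app j).right = c.pt.hom := Under.w (c.ι.app j)
      erw [Category.assoc, hk₀', ← Category.assoc, ← pushout.condition, Category.assoc,
        hwx, Category.assoc, hwj]
    obtain ⟨k', f, g, hfg⟩ := (Types.FilteredColimit.isColimit_eq_iff _ hPc).mp heq
    have hfg' : (z ≫ k₀) ≫ (F.map f).right = (u ≫ (F.obj j).hom) ≫ (F.map g).right := hfg
    have hz : u ≫ (F.obj k').hom = z ≫ (k₀ ≫ (F.map f).right) := by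
      calc u ≫ (F.obj k').hom = u ≫ (F.obj j).hom ≫ (F.map g).right := by
            rw [Under.w (F.map g)]
        _ = (u ≫ (F.obj j).hom) ≫ (F.map g).right := by rw [Category.assoc]
        _ = (z ≫ k₀) ≫ (F.map f).right := hfg'.symm
        _ = z ≫ (k₀ ≫ (F.map f).right) := Category.assoc _ _ _
    refine ⟨k', Under.homMk (pushout.desc (F.obj k').hom (k₀ ≫ (F.map f).right) hz)
      (pushout.inl_desc _ _ _), ?_⟩
    show x = Under.homMk (pushout.desc (F.obj k').hom (k₀ ≫ (F.map f).right) hz)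
      (pushout.inl_desc _ _ _) ≫ c.ι.app k'
    apply Under.UnderMorphism.ext
    apply pushout.hom_ext
    · show pushout.inl u z ≫ x.right = pushout.inl u z ≫ _
      have hwx : pushout.inl u z ≫ x.right = c.pt.hom := Under.w x
      have hwk : (F.obj k').hom ≫ (c.ι.app k').right = c.pt.hom := Under.w (c.ι.app k')
      rw [hwx, Under.comp_right, ← Category.assoc]
      simp only [Under.homMk_right, pushout.inl_desc]
      exact hwk.symm
    · show pushout.inr u z ≫ x.right = pushout.inr u z ≫ _
      rw [Under.comp_right, ← Category.assoc]
      simp only [Under.homMk_right, pushout.inr_desc]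
      erw [Category.assoc]
      have hcw : (F.map f).right ≫ (c.ι.app k').right = (c.ι.app j).right := by
        rw [← Under.comp_right, c.w f]
      erw [hcw, hk₀']
  · -- injectivity
    intro i j xi xj hx
    have hx' : xi ≫ c.ι.app i = xj ≫ c.ι.app j := hx
    have hq : ((coyoneda.obj (op Q)).mapCocone ((Under.forget M).mapCocone c)).ι.app i
          (pushout.inr u z ≫ xi.right) =
        ((coyoneda.obj (op Q)).mapCocone ((Under.forget M).mapCocone c)).ι.app j
          (pushout.inr u z ≫ xj.right) := by
      show (pushout.inr u z ≫ xi.right) ≫ (c.ι.app i).right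
        = (pushout.inr u z ≫ xj.right) ≫ (c.ι.app j).right
      rw [Category.assoc, Category.assoc, ← Under.comp_right, ← Under.comp_right, hx']
    obtain ⟨k, f, g, hfg⟩ := (Types.FilteredColimit.isColimit_eq_iff _ hQc).mp hq
    have hfg' : (pushout.inr u z ≫ xi.right) ≫ (F.map f).right
        = (pushout.inr u z ≫ xj.right) ≫ (F.map g).right := hfg
    refine ⟨k, f, g, ?_⟩
    show xi ≫ F.map f = xj ≫ F.map g
    apply Under.UnderMorphism.ext
    apply pushout.hom_ext
    · show pushout.inl u z ≫ _ = pushout.inl u z ≫ _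
      rw [Under.comp_right, Under.comp_right, ← Category.assoc, ← Category.assoc]
      have h1 : pushout.inl u z ≫ xi.right = (F.obj i).hom := Under.w xi
      have h2 : pushout.inl u z ≫ xj.right = (F.obj j).hom := Under.w xj
      rw [h1, h2, Under.w (F.map f), Under.w (F.map g)]
    · show pushout.inr u z ≫ _ = pushout.inr u z ≫ _
      rw [Under.comp_right, Under.comp_right, ← Category.assoc, ← Category.assoc]
      exact hfg'

end Aux

/-- In a locally `κ`-presentable category with the transferability property (monomorphisms
are stable under pushouts), an object that is both `κ`-injective and `κ`-pure-injective is
injective with respect to all monomorphisms. -/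
theorem injective_of_kInjective_of_kPureInjective {C : Type u} [Category.{v} C]
    {κ : Cardinal.{v}} (h : LocallyPresentable C κ)
    (transfer : ∀ {X Y Z W : C} (m : X ⟶ Y) (g : X ⟶ Z) (h' : Z ⟶ W) (i : Y ⟶ W),
      Mono m → IsPushout g m h' i → Mono h')
    (M : C)
    (hinj : ∀ {A B : C} (n : A ⟶ B), Mono n → KPresentable κ (Under.mk n) → InjWrt n M)
    (hpure : ∀ {A B : C} (n : A ⟶ B), Mono n → KPure κ n → InjWrt n M) :
    ∀ {A B : C} (n : A ⟶ B), Mono n → InjWrt n M := by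
  obtain ⟨hreg, hcolim, -⟩ := h
  haveI : HasColimits C := hcolim
  -- Key lemma: every monomorphism out of the `κ`-injective object `M` is `κ`-pure.
  have key : ∀ {N : C} (f : M ⟶ N), Mono f → KPure κ f := by
    intro N f hf P Q z uu v hP hQ hcomm
    have hmonot : Mono (pushout.inl uu z) := by
      rw [← pushout.inl_desc f v hcomm] at hf
      exact mono_of_mono (pushout.inl uu z) (pushout.desc f v hcomm)
    obtain ⟨d', hd'⟩ := hinj (pushout.inl uu z) hmonot
      (kPresentable_pushout hreg z uu hP hQ) (𝟙 M)
    refine ⟨pushout.inr uu z ≫ d', ?_⟩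
    rw [← Category.assoc, ← pushout.condition, Category.assoc, hd', Category.comp_id]
  intro A B n hn uu
  have hmono : Mono (pushout.inl uu n) :=
    transfer n uu _ _ hn (IsPushout.of_hasPushout uu n)
  obtain ⟨r, hr⟩ := hpure (pushout.inl uu n) hmono (key _ hmono) (𝟙 M)
  refine ⟨pushout.inr uu n ≫ r, ?_⟩
  rw [← Category.assoc, ← pushout.condition, Category.assoc, hr, Category.comp_id]
end

section
/- Let C be a locally λ-presentable category, γ a regular cardinal, and suppose (1) C has enough γ-injectives (every object admits a monomorphism into an object injective with respect to all γ-presentable monomorphisms), and (2) every monomorphism of C is a transfinite composition of γ-presentable monomorphisms. Then C has enough injectives: every object admits a monomorphism into an object injective with respect to all monomorphisms. -/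
universe v u

open CategoryTheory Limits Opposite

/-- The canonical cocone at stage `j` over the restriction of a chain `F` to `Set.Iio j`. -/
@[simps]
def chainCocone {C : Type u} [Category.{v} C] {J : Type v} [Preorder J] (F : J ⥤ C) (j : J) :
    Cocone ((Subtype.mono_coe (· ∈ Set.Iio j)).functor ⋙ F) where
  pt := F.obj j
  ι :=
    { app := fun i => F.map (homOfLE i.2.le)
      naturality := fun i i' g => by
        dsimp
        rw [Category.comp_id]
        erw [← F.map_comp]
        exact congrArg F.map (Subsingleton.elim _ _) }

/-- `f` is a transfinite composition of morphisms in `N`: `f` is (up to isomorphism) the map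
from the bottom to the top of a smooth chain indexed by a well-ordered set, all of whose
successor steps lie in `N`. -/
def IsTransfiniteCompositionOf {C : Type u} [Category.{v} C] (N : MorphismProperty C)
    {A B : C} (f : A ⟶ B) : Prop :=
  ∃ (J : Type v) (_ : LinearOrder J) (_ : OrderBot J) (_ : OrderTop J)
    (_ : WellFoundedLT J) (_ : SuccOrder J) (F : J ⥤ C)
    (e₁ : A ≅ F.obj ⊥) (e₂ : F.obj ⊤ ≅ B),
    (∀ j : J, ¬ IsMax j → N (F.map (homOfLE (Order.le_succ j)))) ∧
    (∀ j : J, Order.IsSuccLimit j → Nonempty (IsColimit (chainCocone F j))) ∧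
    f = e₁.hom ≫ F.map (homOfLE bot_le) ≫ e₂.hom


/-- A partial compatible family of maps from stages of a chain `F` to `M`, extending `u₀`. -/
structure PartialFam {C : Type u} [Category.{v} C] {J : Type v} [Preorder J] [OrderBot J]
    (F : J ⥤ C) (M : C) (u₀ : F.obj ⊥ ⟶ M) where
  top : J
  map : ∀ i : J, i ≤ top → (F.obj i ⟶ M)
  compat : ∀ (i j : J) (hij : i ≤ j) (hj : j ≤ top),
    F.map (homOfLE hij) ≫ map j hj = map i (hij.trans hj)
  bot_eq : map ⊥ bot_le = u₀

instance {C : Type u} [Category.{v} C] {J : Type v} [Preorder J] [OrderBot J]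
    (F : J ⥤ C) (M : C) (u₀ : F.obj ⊥ ⟶ M) : Preorder (PartialFam F M u₀) where
  le p q := ∃ h : p.top ≤ q.top, ∀ i (hi : i ≤ p.top), q.map i (hi.trans h) = p.map i hi
  le_refl p := ⟨le_rfl, fun _ _ => rfl⟩
  le_trans p q r := fun ⟨h₁, e₁⟩ ⟨h₂, e₂⟩ =>
    ⟨h₁.trans h₂, fun i hi => (e₂ i (hi.trans h₁)).trans (e₁ i hi)⟩

/-- The trivial partial family defined only at `⊥`. -/
def PartialFam.base {C : Type u} [Category.{v} C] {J : Type v} [PartialOrder J] [OrderBot J]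
    (F : J ⥤ C) (M : C) (u₀ : F.obj ⊥ ⟶ M) : PartialFam F M u₀ where
  top := ⊥
  map i hi := eqToHom (congrArg F.obj (le_bot_iff.mp hi)) ≫ u₀
  compat i j hij hj := by
    obtain rfl : j = ⊥ := le_bot_iff.mp hj
    obtain rfl : i = ⊥ := le_bot_iff.mp hij
    rw [show homOfLE hij = 𝟙 (⊥ : J) from rfl, F.map_id, Category.id_comp]
  bot_eq := by simp

/-- If `M` is injective with respect to each successor step of a smooth chain `F`, then any
map `F.obj ⊥ ⟶ M` extends along the transfinite composite `F.obj ⊥ ⟶ F.obj ⊤`. -/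
theorem exists_extension_of_chain {C : Type u} [Category.{v} C] {J : Type v} [LinearOrder J]
    [OrderBot J] [OrderTop J] [WellFoundedLT J] [SuccOrder J] (F : J ⥤ C) (M : C)
    (hstep : ∀ j : J, ¬ IsMax j → InjWrt (F.map (homOfLE (Order.le_succ j))) M)
    (hlim : ∀ j : J, Order.IsSuccLimit j → Nonempty (IsColimit (chainCocone F j)))
    (u₀ : F.obj ⊥ ⟶ M) : ∃ w : F.obj ⊤ ⟶ M, F.map (homOfLE bot_le) ≫ w = u₀ := by
  haveI : Nonempty (PartialFam F M u₀) := ⟨PartialFam.base F M u₀⟩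
  have bound : ∀ c : Set (PartialFam F M u₀), IsChain (· ≤ ·) c → c.Nonempty → BddAbove c := by
    intro c hc hne
    have agree : ∀ p ∈ c, ∀ q ∈ c, ∀ (i : J) (hip : i ≤ p.top) (hiq : i ≤ q.top),
        p.map i hip = q.map i hiq := by
      intro p hp q hq i hip hiq
      rcases hc.total hp hq with ⟨h, e⟩ | ⟨h, e⟩
      · exact (e i hip).symm
      · exact e i hiq
    have hTne : {x : J | ∀ p ∈ c, p.top ≤ x}.Nonempty := ⟨⊤, fun p _ => le_top⟩
    set T : Set J := {x : J | ∀ p ∈ c, p.top ≤ x} with hT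
    set t := (IsWellFounded.wf (r := ((· < ·) : J → J → Prop))).min T hTne with ht
    have htT : t ∈ T := WellFounded.min_mem _ _ _
    have htle : ∀ x ∈ T, ¬ x < t := fun x hx => WellFounded.not_lt_min _ _ hx
    by_cases hatt : ∃ p ∈ c, p.top = t
    · obtain ⟨p, hp, hpt⟩ := hatt
      exact ⟨p, fun q hq => ⟨hpt ▸ htT q hq, fun i hi => agree p hp q hq i _ hi⟩⟩
    · push_neg at hatt
      have hlt : ∀ p ∈ c, p.top < t := fun p hp => lt_of_le_of_ne (htT p hp) (hatt p hp)
      obtain ⟨y, hy⟩ := hne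
      have hlimt : Order.IsSuccLimit t := by
        constructor
        · intro hmin
          exact absurd (hmin (hlt y hy).le) (not_le.mpr (hlt y hy))
        · intro a hcov
          have haT : a ∉ T := fun haT => (htle a haT) hcov.lt
          have : ∃ p ∈ c, ¬ p.top ≤ a := by
            by_contra hcon
            push_neg at hcon
            exact haT hcon
          obtain ⟨p, hp, hpa⟩ := this
          exact hcov.2 (not_le.mp hpa) (hlt p hp)
      obtain ⟨hcol⟩ := hlim t hlimt
      have hex : ∀ i : Set.Iio t, ∃ p, p ∈ c ∧ i.1 ≤ p.top := by
        intro i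
        by_contra hcon
        push_neg at hcon
        exact htle i.1 (fun p hp => (hcon p hp).le) i.2
      choose P hPc hPle using hex
      have hnat : ∀ (i i' : Set.Iio t) (h : i.1 ≤ i'.1),
          F.map (homOfLE h) ≫ (P i').map i'.1 (hPle i') = (P i).map i.1 (hPle i) := by
        intro i i' h
        rw [(P i').compat i.1 i'.1 h (hPle i')]
        exact agree (P i') (hPc i') (P i) (hPc i) i.1 _ _
      let K : Cocone ((Subtype.mono_coe (· ∈ Set.Iio t)).functor ⋙ F) :=
        { pt := M
          ι :=
            { app := fun i => (P i).map i.1 (hPle i)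
              naturality := fun i i' g => by
                dsimp
                rw [Category.comp_id]
                exact hnat i i' (leOfHom g) } }
      have he : ∀ (p : F.obj t = F.obj t), eqToHom p = 𝟙 (F.obj t) := fun p => eqToHom_refl _ p
      have hfac : ∀ i : Set.Iio t,
          F.map (homOfLE i.2.le) ≫ hcol.desc K = (P i).map i.1 (hPle i) := fun i =>
        hcol.fac K i
      refine ⟨{ top := t
                map := fun i hi => if h : i < t then (P ⟨i, h⟩).map i (hPle ⟨i, h⟩)
                  else eqToHom (congrArg F.obj (le_antisymm hi (not_lt.mp h))) ≫ hcol.desc K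
                compat := ?_
                bot_eq := ?_ }, ?_⟩
      · intro i j hij hj
        by_cases hjt : j < t
        · have hit : i < t := lt_of_le_of_lt hij hjt
          rw [dif_pos hjt, dif_pos hit]
          exact hnat ⟨i, hit⟩ ⟨j, hjt⟩ hij
        · obtain rfl : j = t := le_antisymm hj (not_lt.mp hjt)
          rw [dif_neg hjt, he]
          erw [Category.id_comp]
          by_cases hit : i < t
          · rw [dif_pos hit]
            exact hfac ⟨i, hit⟩
          · obtain rfl : i = t := le_antisymm hij (not_lt.mp hit)
            rw [dif_neg hit, he]
            erw [Category.id_comp]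
            rw [show homOfLE hij = 𝟙 t from rfl, F.map_id]
            erw [Category.id_comp]
      · have hbt : (⊥ : J) < t := by
          rcases eq_bot_or_bot_lt t with h | h
          · exact absurd (h ▸ isMin_bot) hlimt.not_isMin
          · exact h
        rw [dif_pos hbt]
        exact (P ⟨⊥, hbt⟩).bot_eq
      · intro p hp
        refine ⟨htT p hp, fun i hi => ?_⟩
        have hit : i < t := lt_of_le_of_lt hi (hlt p hp)
        dsimp only
        rw [dif_pos hit]
        exact agree (P ⟨i, hit⟩) (hPc _) p hp i _ _
  obtain ⟨m, hm⟩ := zorn_le_nonempty (α := PartialFam F M u₀) bound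
  -- the maximal family reaches ⊤
  have hmt : m.top = ⊤ := by
    by_contra hne
    have hnotmax : ¬ IsMax m.top := fun hmax => hne (top_le_iff.mp (hmax le_top))
    obtain ⟨w', hw'⟩ := hstep m.top hnotmax (m.map m.top le_rfl)
    have hlt : m.top < Order.succ m.top := Order.lt_succ_of_not_isMax hnotmax
    have he : ∀ (p : F.obj (Order.succ m.top) = F.obj (Order.succ m.top)),
        eqToHom p = 𝟙 _ := fun p => eqToHom_refl _ p
    have hq : ∃ q : PartialFam F M u₀, m ≤ q ∧ m.top < q.top := by
      refine ⟨⟨Order.succ m.top,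
        fun i hi => if h : i ≤ m.top then m.map i h
          else eqToHom (congrArg F.obj
            (le_antisymm hi (Order.succ_le_of_lt (not_le.mp h)))) ≫ w', ?_, ?_⟩,
        ⟨hlt.le, fun i hi => dif_pos hi⟩, hlt⟩
      · intro i j hij hj
        by_cases hjm : j ≤ m.top
        · have him : i ≤ m.top := hij.trans hjm
          rw [dif_pos hjm, dif_pos him]
          exact m.compat i j hij hjm
        · obtain rfl : j = Order.succ m.top :=
            le_antisymm hj (Order.succ_le_of_lt (not_le.mp hjm))
          rw [dif_neg hjm, he, Category.id_comp]
          by_cases him : i ≤ m.top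
          · rw [dif_pos him,
              show homOfLE hij = homOfLE him ≫ homOfLE (Order.le_succ m.top) from rfl,
              F.map_comp, Category.assoc, hw']
            exact m.compat i m.top him le_rfl
          · obtain rfl : i = Order.succ m.top :=
              le_antisymm hij (Order.succ_le_of_lt (not_le.mp him))
            rw [dif_neg him, he, Category.id_comp,
              show homOfLE hij = 𝟙 (Order.succ m.top) from rfl, F.map_id, Category.id_comp]
      · rw [dif_pos bot_le]
        exact m.bot_eq
    obtain ⟨q, hmq, hqlt⟩ := hq
    exact absurd (hm hmq).1 (not_le.mpr hqlt)
  refine ⟨m.map ⊤ hmt.ge, ?_⟩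
  have := m.compat ⊥ ⊤ bot_le hmt.ge
  rw [this]
  exact m.bot_eq

/-- If `C` is locally `λ`-presentable, has enough `γ`-injectives, and every monomorphism is
a transfinite composition of `γ`-presentable monomorphisms, then `C` has enough injectives. -/
theorem enough_injectives_of_transfinite {C : Type u} [Category.{v} C]
    {lam γ : Cardinal.{v}} (h : LocallyPresentable C lam) (hγ : Cardinal.IsRegular γ)
    (h1 : ∀ A : C, ∃ (M : C) (m : A ⟶ M), Mono m ∧
      (∀ {X Y : C} (n : X ⟶ Y), Mono n → KPresentable γ (Under.mk n) → InjWrt n M))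
    (h2 : ∀ {A B : C} (f : A ⟶ B), Mono f →
      IsTransfiniteCompositionOf
        (fun X Y n => Mono n ∧ KPresentable γ (Under.mk (Y := Y) n)) f) :
    ∀ A : C, ∃ (M : C) (m : A ⟶ M), Mono m ∧
      (∀ {X Y : C} (n : X ⟶ Y), Mono n → InjWrt n M) := by
  intro A
  obtain ⟨M, mm, hmono, hinj⟩ := h1 A
  refine ⟨M, mm, hmono, ?_⟩
  intro X Y n hn u
  obtain ⟨J, _, _, _, _, _, F, e₁, e₂, hsucc, hlim, heq⟩ := h2 n hn
  obtain ⟨w, hw⟩ := exists_extension_of_chain F M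
    (fun j hj => hinj _ (hsucc j hj).1 (hsucc j hj).2) hlim (e₁.inv ≫ u)
  refine ⟨e₂.inv ≫ w, ?_⟩
  rw [heq]
  simp only [Category.assoc, Iso.hom_inv_id_assoc]
  rw [hw, Iso.hom_inv_id_assoc]
end
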